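/- Define P(s) := ∏_{n=0}^∞ E_{d'}(s/z_n²)^{k_n}. Then: (1) for every s ∈ ℂ the infinite product converges (the family is multipliable); (2) P is differentiable on all of ℂ (entire); and (3) P(s) = 0 if and only if s = z_n² for some n. -/

import Mathlib

/-- The Weierstrass elementary factor: `E 0 w = 1 - w` and
`E p w = (1 - w) * exp (∑_{k=1}^p w^k / k)` for `p ≥ 1`. -/
noncomputable def elemFactor (p : ℕ) (w : ℂ) : ℂ :=
  (1 - w) * Complex.exp (∑ k ∈ Finset.Icc 1 p, w ^ k / (k : ℂ))


open Complex Finset Filter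

noncomputable def elemLog (p : ℕ) (w : ℂ) : ℂ :=
  Complex.log (1 - w) + ∑ k ∈ Finset.Icc 1 p, w ^ k / (k : ℂ)

lemma elemFactor_eq_exp {p : ℕ} {w : ℂ} (hw : ‖w‖ < 1) :
    elemFactor p w = Complex.exp (elemLog p w) := by
  have h1 : (1 : ℂ) - w ≠ 0 := by
    intro h
    rw [sub_eq_zero] at h
    rw [← h] at hw
    simp at hw
  rw [elemFactor, elemLog, Complex.exp_add, Complex.exp_log h1]

lemma sum_range_eq_Q (p : ℕ) (w : ℂ) :
    ∑ i ∈ Finset.range (p + 1), w ^ i / (i : ℂ) = ∑ k ∈ Finset.Icc 1 p, w ^ k / (k : ℂ) := by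
  have : Finset.range (p + 1) = insert 0 (Finset.Icc 1 p) := by
    ext x
    simp only [Finset.mem_range, Finset.mem_insert, Finset.mem_Icc]
    omega
  rw [this, Finset.sum_insert (by simp)]
  simp

set_option maxHeartbeats 800000 in
lemma norm_elemLog_le {p : ℕ} {w : ℂ} (hw : ‖w‖ ≤ 1 / 2) :
    ‖elemLog p w‖ ≤ 2 * ‖w‖ ^ (p + 1) := by
  have hw1 : ‖w‖ < 1 := lt_of_le_of_lt hw (by norm_num)
  have hs := Complex.hasSum_taylorSeries_neg_log hw1
  have htail : HasSum (fun n : ℕ => w ^ (n + (p + 1)) / ((n + (p + 1) : ℕ) : ℂ))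
      (-(elemLog p w)) := by
    refine (hasSum_nat_add_iff (f := fun n : ℕ => w ^ n / (n : ℂ)) (p + 1)).mpr ?_
    have h : -(elemLog p w) + ∑ i ∈ Finset.range (p + 1), w ^ i / (i : ℂ) = -log (1 - w) := by
      rw [sum_range_eq_Q, elemLog]; ring
    rwa [h]
  have hgeo : HasSum (fun n : ℕ => ‖w‖ ^ (p + 1) * ‖w‖ ^ n)
      (‖w‖ ^ (p + 1) * (1 - ‖w‖)⁻¹) :=
    (hasSum_geometric_of_lt_one (norm_nonneg w) hw1).mul_left _
  have hb : ∀ n : ℕ, ‖w ^ (n + (p + 1)) / ((n + (p + 1) : ℕ) : ℂ)‖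
      ≤ ‖w‖ ^ (p + 1) * ‖w‖ ^ n := by
    intro n
    rw [norm_div, norm_pow, Complex.norm_natCast]
    calc ‖w‖ ^ (n + (p + 1)) / ((n + (p + 1) : ℕ) : ℝ)
        ≤ ‖w‖ ^ (n + (p + 1)) / 1 := by
          apply div_le_div_of_nonneg_left
          · positivity
          · norm_num
          · exact_mod_cast Nat.one_le_iff_ne_zero.mpr (by omega)
      _ = ‖w‖ ^ (p + 1) * ‖w‖ ^ n := by rw [div_one, pow_add, mul_comm]
  have hle := tsum_of_norm_bounded hgeo hb
  rw [htail.tsum_eq, norm_neg] at hle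
  refine hle.trans ?_
  have h2 : (1 - ‖w‖)⁻¹ ≤ 2 := by
    rw [inv_le_comm₀ (by linarith) (by norm_num)]
    linarith
  calc ‖w‖ ^ (p + 1) * (1 - ‖w‖)⁻¹ ≤ ‖w‖ ^ (p + 1) * 2 := by
        gcongr
    _ = 2 * ‖w‖ ^ (p + 1) := mul_comm _ _

lemma elemFactor_eq_zero_iff {p : ℕ} {w : ℂ} : elemFactor p w = 0 ↔ w = 1 := by
  rw [elemFactor, mul_eq_zero]
  simp only [Complex.exp_ne_zero, or_false, sub_eq_zero]
  exact eq_comm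

lemma elemFactor_differentiable (p : ℕ) (c : ℂ) :
    Differentiable ℂ (fun s : ℂ => elemFactor p (s / c)) := by
  unfold elemFactor
  apply Differentiable.mul
  · exact (differentiable_const 1).sub (differentiable_id.div_const c)
  · apply Differentiable.cexp
    apply Differentiable.fun_sum
    intro i _
    exact ((differentiable_id.div_const c).pow i).div_const _

lemma hadamard_main (d' : ℕ) (z : ℕ → ℝ) (hzpos : ∀ n, 0 < z n)
    (hztop : Filter.Tendsto z Filter.atTop Filter.atTop) (k : ℕ → ℕ) (hk : ∀ n, 0 < k n)
    (hsum : Summable fun n => (k n : ℝ) / z n ^ (2 * (d' + 1))) {R : ℝ} (hR : 0 < R) :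
    ∃ (N : ℕ) (F : ℂ → ℂ),
      (∀ n, N ≤ n → 4 * R ≤ z n ^ 2) ∧
      (∀ s ∈ Metric.ball (0 : ℂ) R,
        HasProd (fun n => elemFactor d' (s / (z n : ℂ) ^ 2) ^ k n) (F s)) ∧
      DifferentiableOn ℂ F (Metric.ball 0 R) ∧
      (∀ s ∈ Metric.ball (0 : ℂ) R,
        (F s = 0 ↔ ∃ n, n < N ∧ s = (z n : ℂ) ^ 2)) := by
  obtain ⟨N, hN⟩ := Filter.eventually_atTop.mp (hztop.eventually_ge_atTop (max 1 (4 * R)))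
  have hN2 : ∀ n, N ≤ n → 4 * R ≤ z n ^ 2 := by
    intro n hn
    have h1 : (1 : ℝ) ≤ z n := le_trans (le_max_left _ _) (hN n hn)
    have h2 : 4 * R ≤ z n := le_trans (le_max_right _ _) (hN n hn)
    nlinarith
  set f : ℕ → ℂ → ℂ := fun n s => elemFactor d' (s / (z n : ℂ) ^ 2) ^ k n with hf
  set g : ℕ → ℂ → ℂ := fun n s => (k n : ℂ) * elemLog d' (s / (z n : ℂ) ^ 2) with hg
  set u : ℕ → ℝ := fun n => (k n : ℝ) * (2 * (R ^ (d' + 1) / z n ^ (2 * (d' + 1)))) with hudef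
  have hcnorm : ∀ n, ‖((z n : ℂ)) ^ 2‖ = z n ^ 2 := by
    intro n
    rw [norm_pow, Complex.norm_real, Real.norm_eq_abs, abs_of_pos (hzpos n)]
  have hzsq : ∀ n, (0:ℝ) < z n ^ 2 := fun n => pow_pos (hzpos n) 2
  have hu : Summable u := by
    refine (hsum.mul_left (2 * R ^ (d' + 1))).congr fun n => ?_
    simp only [hudef]
    ring
  -- key norm bound on the ball, for n ≥ N
  have hwle : ∀ s ∈ Metric.ball (0 : ℂ) R, ∀ n, N ≤ n →
      ‖s / (z n : ℂ) ^ 2‖ ≤ R / z n ^ 2 := by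
    intro s hs n hn
    rw [norm_div, hcnorm]
    have hsR : ‖s‖ ≤ R := le_of_lt (by simpa using Metric.mem_ball.mp hs)
    gcongr
  have hRz : ∀ n, N ≤ n → R / z n ^ 2 ≤ 1 / 4 := by
    intro n hn
    have h4 : (0:ℝ) < 4 * R := by linarith
    calc R / z n ^ 2 ≤ R / (4 * R) := by gcongr; exact hN2 n hn
      _ = 1 / 4 := by field_simp
  have hwquarter : ∀ s ∈ Metric.ball (0 : ℂ) R, ∀ n, N ≤ n →
      ‖s / (z n : ℂ) ^ 2‖ ≤ 1 / 4 :=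
    fun s hs n hn => (hwle s hs n hn).trans (hRz n hn)
  -- bound on the tail logs
  have hgb : ∀ n, N ≤ n → ∀ s ∈ Metric.ball (0 : ℂ) R, ‖g n s‖ ≤ u n := by
    intro n hn s hs
    have hq := hwquarter s hs n hn
    have hhalf : ‖s / (z n : ℂ) ^ 2‖ ≤ 1 / 2 := hq.trans (by norm_num)
    rw [hg, norm_mul, Complex.norm_natCast, hudef]
    refine mul_le_mul_of_nonneg_left ?_ (Nat.cast_nonneg _)
    refine (norm_elemLog_le hhalf).trans ?_
    have h1 : ‖s / (z n : ℂ) ^ 2‖ ^ (d' + 1) ≤ (R / z n ^ 2) ^ (d' + 1) := by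
      gcongr
      exact hwle s hs n hn
    refine (by gcongr : 2 * ‖s / (z n : ℂ) ^ 2‖ ^ (d' + 1) ≤ 2 * (R / z n ^ 2) ^ (d' + 1)).trans ?_
    rw [div_pow, ← pow_mul]
  -- tail index type
  set T : ℂ → ℂ := fun s => ∑' i : {x : ℕ // x ∉ Finset.range N}, g (↑i) s with hT
  set F : ℂ → ℂ := fun s => (∏ n ∈ Finset.range N, f n s) * Complex.exp (T s) with hF
  refine ⟨N, F, hN2, ?_, ?_, ?_⟩
  · -- HasProd
    intro s hs
    have hmem : ∀ i : {x : ℕ // x ∉ Finset.range N}, N ≤ (i : ℕ) := by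
      intro i
      have := i.2
      simpa using this
    have husub : Summable fun i : {x : ℕ // x ∉ Finset.range N} => u i :=
      hu.subtype _
    have hgsum : Summable fun i : {x : ℕ // x ∉ Finset.range N} => g (↑i) s :=
      Summable.of_norm_bounded husub fun i => hgb _ (hmem i) s hs
    have hexp := hgsum.hasSum.cexp
    have hfe : (cexp ∘ fun i : {x : ℕ // x ∉ Finset.range N} => g (↑i) s)
        = fun i : {x : ℕ // x ∉ Finset.range N} => f (↑i) s := by
      funext i
      have hlt : ‖s / (z (↑i) : ℂ) ^ 2‖ < 1 :=
        lt_of_le_of_lt (hwquarter s hs _ (hmem i)) (by norm_num)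
      simp only [Function.comp_apply, hg, hf]
      rw [Complex.exp_nat_mul, ← elemFactor_eq_exp hlt]
    rw [hfe] at hexp
    have hhead := (Finset.range N).hasProd (fun n => f n s)
    exact hhead.mul_compl hexp
  · -- differentiability
    have htails : DifferentiableOn ℂ T (Metric.ball (0:ℂ) R) := by
      refine differentiableOn_tsum_of_summable_norm (hu.subtype _) ?_ Metric.isOpen_ball ?_
      · rintro ⟨i, hi⟩
        have hiN : N ≤ i := by simpa using hi
        intro x hx
        apply DifferentiableAt.differentiableWithinAt
        apply DifferentiableAt.const_mul
        apply DifferentiableAt.add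
        · apply DifferentiableAt.clog
          · exact (differentiableAt_const 1).sub (differentiableAt_id.div_const _)
          · rw [Complex.mem_slitPlane_iff]
            left
            have hq := hwquarter x hx i hiN
            have hre : (x / (z i : ℂ) ^ 2).re ≤ 1 / 4 := by
              calc (x / (z i : ℂ) ^ 2).re ≤ |(x / (z i : ℂ) ^ 2).re| := le_abs_self _
                _ ≤ ‖x / (z i : ℂ) ^ 2‖ := Complex.abs_re_le_norm _
                _ ≤ 1 / 4 := hq
            simp only [Complex.sub_re, Complex.one_re]
            linarith
        · apply DifferentiableAt.fun_sum
          intro j _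
          exact ((differentiableAt_id.div_const _).pow j).div_const _
      · rintro ⟨i, hi⟩ w hw
        exact hgb i (by simpa using hi) w hw
    have hhead : DifferentiableOn ℂ (fun s => ∏ n ∈ Finset.range N, f n s)
        (Metric.ball (0:ℂ) R) := by
      apply DifferentiableOn.fun_finset_prod
      intro i _
      exact ((elemFactor_differentiable d' _).pow (k i)).differentiableOn
    exact hhead.mul (htails.cexp)
  · -- zeros
    intro s hs
    rw [hF]
    simp only [mul_eq_zero, Complex.exp_ne_zero, or_false]
    rw [Finset.prod_eq_zero_iff]
    constructor
    · rintro ⟨n, hn, hfn⟩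
      refine ⟨n, Finset.mem_range.mp hn, ?_⟩
      rw [hf] at hfn
      simp only [pow_eq_zero_iff (hk n).ne'] at hfn
      rw [elemFactor_eq_zero_iff] at hfn
      have hcne : ((z n : ℂ)) ^ 2 ≠ 0 := by
        intro h
        have := hcnorm n
        rw [h] at this
        simp at this
        nlinarith [hzpos n, this]
      field_simp at hfn
      exact (div_eq_one_iff_eq hcne).mp hfn
    · rintro ⟨n, hn, rfl⟩
      refine ⟨n, Finset.mem_range.mpr hn, ?_⟩
      rw [hf]
      have hcne : ((z n : ℂ)) ^ 2 ≠ 0 := by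
        intro h
        have := hcnorm n
        rw [h] at this
        simp at this
        nlinarith [hzpos n, this]
      simp only [pow_eq_zero_iff (hk n).ne']
      rw [elemFactor_eq_zero_iff, div_self hcne]

theorem hadamardProduct_entire (d' : ℕ) (z : ℕ → ℝ) (hzinj : Function.Injective z)
    (hzpos : ∀ n, 0 < z n) (hztop : Filter.Tendsto z Filter.atTop Filter.atTop)
    (k : ℕ → ℕ) (hk : ∀ n, 0 < k n)
    (hsum : Summable fun n => (k n : ℝ) / z n ^ (2 * (d' + 1))) :
    (∀ s : ℂ, Multipliable fun n => elemFactor d' (s / (z n : ℂ) ^ 2) ^ k n) ∧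
    Differentiable ℂ (fun s : ℂ => ∏' n, elemFactor d' (s / (z n : ℂ) ^ 2) ^ k n) ∧
    ∀ s : ℂ, (∏' n, elemFactor d' (s / (z n : ℂ) ^ 2) ^ k n) = 0 ↔ ∃ n, s = (z n : ℂ) ^ 2 := by
  have hball : ∀ s : ℂ, s ∈ Metric.ball (0 : ℂ) (‖s‖ + 1) := by
    intro s
    rw [Metric.mem_ball, dist_zero_right]
    exact lt_add_one _
  refine ⟨?_, ?_, ?_⟩
  · intro s
    obtain ⟨N, F, hN, hprod, hdiff, hzero⟩ :=
      hadamard_main d' z hzpos hztop k hk hsum (R := ‖s‖ + 1) (by positivity)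
    exact (hprod s (hball s)).multipliable
  · intro s0
    obtain ⟨N, F, hN, hprod, hdiff, hzero⟩ :=
      hadamard_main d' z hzpos hztop k hk hsum (R := ‖s0‖ + 1) (by positivity)
    have hev : (fun s : ℂ => ∏' n, elemFactor d' (s / (z n : ℂ) ^ 2) ^ k n)
        =ᶠ[nhds s0] F :=
      Filter.eventuallyEq_of_mem (Metric.isOpen_ball.mem_nhds (hball s0))
        (fun s hs => (hprod s hs).tprod_eq)
    exact (hdiff.differentiableAt
      (Metric.isOpen_ball.mem_nhds (hball s0))).congr_of_eventuallyEq hev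
  · intro s
    obtain ⟨N, F, hN, hprod, hdiff, hzero⟩ :=
      hadamard_main d' z hzpos hztop k hk hsum (R := ‖s‖ + 1) (by positivity)
    rw [(hprod s (hball s)).tprod_eq, hzero s (hball s)]
    constructor
    · rintro ⟨n, _, h⟩
      exact ⟨n, h⟩
    · rintro ⟨n, rfl⟩
      refine ⟨n, ?_, rfl⟩
      by_contra hcon
      push_neg at hcon
      have h4 := hN n hcon
      have hnorm : ‖((z n : ℂ)) ^ 2‖ = z n ^ 2 := by
        rw [norm_pow, Complex.norm_real, Real.norm_eq_abs, abs_of_pos (hzpos n)]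
      rw [hnorm] at h4
      nlinarith [hzpos n, sq_nonneg (z n)]
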